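/- Let 0 → A → E → B → 0 be a split extension in the category of reduced groups with action on themselves, with section j and derived actions b·a = j(b)+a-j(b), b^a = j(b)^a - j(b), a^b = a^{j(b)}. Then for all a, a' ∈ A and b, b' ∈ B: a^{(b^{a'})} = a, b^{(b'^a)} = 0, and b^{(a^{b'})} = b^a. -/
import Mathlib


/-- A group with action on itself: a (not necessarily abelian) additive group `G`
with a map `act g h = g^h` satisfying `g^(h+h') = (g^h)^{h'}`, `g^0 = g`,
`(g+g')^h = g^h + g'^h`. -/
class Gwa (G : Type*) extends AddGroup G where
  act : G → G → G
  act_add : ∀ g h h' : G, act g (h + h') = act (act g h) h'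
  act_zero : ∀ g : G, act g 0 = g
  add_act : ∀ g g' h : G, act (g + g') h = act g h + act g' h

open Gwa

/-- Morphisms of groups with action on themselves. -/
def IsGwaHom {G H : Type*} [Gwa G] [Gwa H] (f : G → H) : Prop :=
  (∀ a b : G, f (a + b) = f a + f b) ∧ ∀ a b : G, f (act a b) = act (f a) (f b)

/-- A reduced group with action on itself. -/
class RGwa (G : Type*) extends Gwa G where
  act_comm : ∀ x y z : G, y ≠ 0 → act x y + z = z + act x y
  act_act : ∀ x y z : G, act x (act y z) = act x y

theorem reduced_derived_action_conditions {A E B : Type*} [RGwa A] [RGwa E] [RGwa B]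
    (i : A → E) (p : E → B) (j : B → E)
    (hi : IsGwaHom i) (hp : IsGwaHom p) (hj : IsGwaHom j)
    (hinj : Function.Injective i) (hsurj : Function.Surjective p)
    (hker : ∀ e : E, p e = 0 ↔ ∃ a : A, i a = e)
    (hpj : ∀ b : B, p (j b) = b)
    (dot : B → A → A) (astB : B → A → A) (actA : A → B → A)
    (hdot : ∀ (b : B) (a : A), i (dot b a) = j b + i a - j b)
    (hast : ∀ (b : B) (a : A), i (astB b a) = act (j b) (i a) - j b)
    (hactA : ∀ (a : A) (b : B), i (actA a b) = act (i a) (j b)) :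
    ∀ (a a' : A) (b b' : B),
      act a (astB b a') = a ∧
      astB b (astB b' a) = 0 ∧
      astB b (actA a b') = astB b a := by
  obtain ⟨hiadd, hiact⟩ := hi
  have hi0 : i 0 = 0 := by
    have h : i 0 + i 0 = i 0 + 0 := by rw [add_zero, ← hiadd, add_zero]
    exact add_left_cancel h
  have key : ∀ x y z : E, act x (act y z - y) = x := by
    intro x y z
    rw [sub_eq_add_neg, act_add, RGwa.act_act, ← act_add, add_neg_cancel, act_zero]
  intro a a' b b'
  refine ⟨hinj ?_, hinj ?_, hinj ?_⟩
  · rw [hiact, hast, key]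
  · rw [hast, hast, key, sub_self, hi0]
  · rw [hast, hast, hactA, RGwa.act_act]
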